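/- Let p ≥ 1, d ≥ 1 be an integer, b ≥ 0 and α > b + d/p, and let c0 > 0. Let (ξ_{l,r}), for l ∈ ℕ and 1 ≤ r ≤ N_l where N_l ≤ c0·2^{ld}, be independent standard p-exponential random variables. Then there exists a constant c2 > 0 (depending only on p, d, α, b, c0) such that E exp( c2 · Σ_{l≥0} Σ_{r=1}^{N_l} 2^{−p l (α−b)} |ξ_{l,r}|^p ) < ∞. -/

import Mathlib

open MeasureTheory Real ProbabilityTheory

/-- The standard univariate `p`-exponential distribution `Exp(p;0,1)`: the probability measure
on `ℝ` with density proportional to `exp(−|x|^p/p)`. -/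
noncomputable def stdPExp (p : ℝ) : Measure ℝ :=
  (∫⁻ x : ℝ, ENNReal.ofReal (Real.exp (-(|x| ^ p / p))))⁻¹ •
    MeasureTheory.volume.withDensity fun x => ENNReal.ofReal (Real.exp (-(|x| ^ p / p)))

section Aux

open Set

lemma exp_le_one_add_mul_exp (u : ℝ) : Real.exp u ≤ 1 + u * Real.exp u := by
  have h1 := Real.add_one_le_exp (-u)
  have h2 : Real.exp (-u) * Real.exp u = 1 := by rw [← Real.exp_add]; simp
  nlinarith [Real.exp_pos u]

lemma integrable_abs_rpow_mul_exp {p b q : ℝ} (hp : 1 ≤ p) (hb : 0 < b) (hq : 0 ≤ q) :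
    Integrable (fun x : ℝ => |x| ^ q * Real.exp (-b * |x| ^ p)) := by
  have h0 : IntegrableOn (fun x : ℝ => |x| ^ q * Real.exp (-b * |x| ^ p)) (Ioi 0) :=
    (integrableOn_rpow_mul_exp_neg_mul_rpow (lt_of_lt_of_le neg_one_lt_zero hq) (zero_lt_one.trans_le hp) hb).congr_fun
      (fun x hx => by rw [abs_of_pos hx]) measurableSet_Ioi
  have hIic : IntegrableOn (fun x : ℝ => |x| ^ q * Real.exp (-b * |x| ^ p)) (Iic 0) := by
    rw [← Measure.map_neg_eq_self (volume : Measure ℝ)]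
    have m : MeasurableEmbedding fun x : ℝ => -x :=
      (Homeomorph.neg ℝ).measurableEmbedding
    rw [m.integrableOn_map_iff]
    simp_rw [Function.comp_def, abs_neg, neg_preimage, neg_Iic, neg_zero]
    exact Iff.mpr integrableOn_Ici_iff_integrableOn_Ioi h0
  have := hIic.union h0
  rwa [Iic_union_Ioi, integrableOn_univ] at this

lemma stdPExp_moment (p : ℝ) (hp : 1 ≤ p) :
    ∃ M : ℝ, 0 ≤ M ∧ ∀ s : ℝ, 0 ≤ s → s ≤ 1 / (2 * p) →
      ∫⁻ x, ENNReal.ofReal (Real.exp (s * |x| ^ p)) ∂(stdPExp p) ≤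
        ENNReal.ofReal (Real.exp (s * M)) := by
  have hp0 : 0 < p := lt_of_lt_of_le one_pos hp
  have habs : Continuous fun x : ℝ => |x| ^ p :=
    continuous_abs.rpow_const fun x => Or.inr hp0.le
  have hρc : Continuous fun x : ℝ => Real.exp (-(|x| ^ p / p)) :=
    Real.continuous_exp.comp ((habs.div_const p).neg)
  have hρm : Measurable fun x : ℝ => ENNReal.ofReal (Real.exp (-(|x| ^ p / p))) :=
    (ENNReal.continuous_ofReal.comp hρc).measurable
  have hKm : Measurable fun x : ℝ => ENNReal.ofReal (|x| ^ p * Real.exp (-(|x| ^ p / (2 * p)))) :=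
    (ENNReal.continuous_ofReal.comp
      (habs.mul (Real.continuous_exp.comp (habs.div_const (2 * p)).neg))).measurable
  set Z := ∫⁻ x : ℝ, ENNReal.ofReal (Real.exp (-(|x| ^ p / p))) with hZdef
  set K := ∫⁻ x : ℝ, ENNReal.ofReal (|x| ^ p * Real.exp (-(|x| ^ p / (2 * p)))) with hKdef
  have hZint : Integrable fun x : ℝ => Real.exp (-(|x| ^ p / p)) := by
    have h := integrable_abs_rpow_mul_exp (p := p) (b := 1 / p) (q := 0) hp (by positivity) le_rfl
    refine h.congr (Filter.Eventually.of_forall fun x => ?_)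
    simp only [Real.rpow_zero, one_mul]
    congr 1
    ring
  have hZ_top : Z ≠ ⊤ :=
    ((lintegral_ofReal_le_lintegral_enorm _).trans_lt hZint.2).ne
  have hKint : Integrable fun x : ℝ => |x| ^ p * Real.exp (-(|x| ^ p / (2 * p))) := by
    have h := integrable_abs_rpow_mul_exp (p := p) (b := 1 / (2 * p)) (q := p) hp
      (by positivity) hp0.le
    refine h.congr (Filter.Eventually.of_forall fun x => ?_)
    congr 1
    ring
  have hK_top : K ≠ ⊤ :=
    ((lintegral_ofReal_le_lintegral_enorm _).trans_lt hKint.2).ne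
  have hZ_0 : Z ≠ 0 := by
    have hle : ENNReal.ofReal (Real.exp (-(1 / p))) * volume (Icc (0:ℝ) 1) ≤ Z := by
      rw [← setLIntegral_const (Icc (0:ℝ) 1) _]
      refine le_trans (setLIntegral_mono hρm fun x hx => ?_) (setLIntegral_le_lintegral _ _)
      refine ENNReal.ofReal_le_ofReal (Real.exp_le_exp.mpr (neg_le_neg ?_))
      have hx1 : |x| ≤ 1 := by
        rw [abs_le]; exact ⟨by linarith [hx.1], hx.2⟩
      have h1 : |x| ^ p ≤ 1 := Real.rpow_le_one (abs_nonneg x) hx1 hp0.le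
      gcongr
    have hpos : 0 < ENNReal.ofReal (Real.exp (-(1 / p))) * volume (Icc (0:ℝ) 1) := by
      rw [Real.volume_Icc]
      simp only [sub_zero, ENNReal.ofReal_one, mul_one]
      exact ENNReal.ofReal_pos.mpr (Real.exp_pos _)
    exact (lt_of_lt_of_le hpos hle).ne'
  have hm : 0 ≤ (K * Z⁻¹).toReal := ENNReal.toReal_nonneg
  refine ⟨(K * Z⁻¹).toReal + 1, by positivity, fun s hs0 hs1 => ?_⟩
  have hφm : Measurable fun x : ℝ => ENNReal.ofReal (Real.exp (s * |x| ^ p)) :=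
    (ENNReal.continuous_ofReal.comp (Real.continuous_exp.comp
      (continuous_const.mul habs))).measurable
  rw [stdPExp, lintegral_smul_measure, lintegral_withDensity_eq_lintegral_mul _ hρm hφm,
    ← hZdef]
  simp only [Pi.mul_apply]
  have hpb : ∀ x : ℝ,
      ENNReal.ofReal (Real.exp (-(|x| ^ p / p))) * ENNReal.ofReal (Real.exp (s * |x| ^ p)) ≤
      ENNReal.ofReal (Real.exp (-(|x| ^ p / p))) +
        ENNReal.ofReal s * ENNReal.ofReal (|x| ^ p * Real.exp (-(|x| ^ p / (2 * p)))) := by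
    intro x
    set y := |x| ^ p with hy
    have hy0 : 0 ≤ y := Real.rpow_nonneg (abs_nonneg x) p
    have key : Real.exp (-(y / p)) * Real.exp (s * y) ≤
        Real.exp (-(y / p)) + s * (y * Real.exp (-(y / (2 * p)))) := by
      have h2 : Real.exp (s * y) ≤ Real.exp (y / (2 * p)) := by
        refine Real.exp_le_exp.mpr ?_
        calc s * y ≤ (1 / (2 * p)) * y := mul_le_mul_of_nonneg_right hs1 hy0
          _ = y / (2 * p) := by ring
      have h1 : Real.exp (s * y) ≤ 1 + (s * y) * Real.exp (y / (2 * p)) := by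
        have h0 := exp_le_one_add_mul_exp (s * y)
        nlinarith [mul_nonneg hs0 hy0]
      have h3 : Real.exp (-(y / p)) * Real.exp (y / (2 * p)) = Real.exp (-(y / (2 * p))) := by
        rw [← Real.exp_add]; congr 1; ring
      calc Real.exp (-(y / p)) * Real.exp (s * y)
          ≤ Real.exp (-(y / p)) * (1 + (s * y) * Real.exp (y / (2 * p))) :=
            mul_le_mul_of_nonneg_left h1 (Real.exp_pos _).le
        _ = Real.exp (-(y / p)) + s * (y * (Real.exp (-(y / p)) * Real.exp (y / (2 * p)))) := by
            ring
        _ = Real.exp (-(y / p)) + s * (y * Real.exp (-(y / (2 * p)))) := by rw [h3]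
    calc ENNReal.ofReal (Real.exp (-(y / p))) * ENNReal.ofReal (Real.exp (s * y))
        = ENNReal.ofReal (Real.exp (-(y / p)) * Real.exp (s * y)) :=
          (ENNReal.ofReal_mul (Real.exp_pos _).le).symm
      _ ≤ ENNReal.ofReal (Real.exp (-(y / p)) + s * (y * Real.exp (-(y / (2 * p))))) :=
          ENNReal.ofReal_le_ofReal key
      _ ≤ ENNReal.ofReal (Real.exp (-(y / p))) +
            ENNReal.ofReal (s * (y * Real.exp (-(y / (2 * p))))) := ENNReal.ofReal_add_le
      _ = _ := by rw [ENNReal.ofReal_mul hs0]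
  have step1 : ∫⁻ x : ℝ,
      ENNReal.ofReal (Real.exp (-(|x| ^ p / p))) * ENNReal.ofReal (Real.exp (s * |x| ^ p)) ≤
      Z + ENNReal.ofReal s * K := by
    refine le_trans (lintegral_mono hpb) ?_
    rw [lintegral_add_left hρm, lintegral_const_mul _ hKm]
  calc Z⁻¹ * ∫⁻ x : ℝ,
        ENNReal.ofReal (Real.exp (-(|x| ^ p / p))) * ENNReal.ofReal (Real.exp (s * |x| ^ p))
      ≤ Z⁻¹ * (Z + ENNReal.ofReal s * K) := mul_le_mul_right step1 _
    _ = 1 + ENNReal.ofReal s * (K * Z⁻¹) := by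
        rw [mul_add, ENNReal.inv_mul_cancel hZ_0 hZ_top]
        ring_nf
    _ ≤ ENNReal.ofReal (Real.exp (s * ((K * Z⁻¹).toReal + 1))) := by
        have hKZ : K * Z⁻¹ = ENNReal.ofReal ((K * Z⁻¹).toReal) :=
          (ENNReal.ofReal_toReal (ENNReal.mul_ne_top hK_top (ENNReal.inv_ne_top.mpr hZ_0))).symm
        conv_lhs => rw [hKZ, ← ENNReal.ofReal_mul hs0, ← ENNReal.ofReal_one,
          ← ENNReal.ofReal_add zero_le_one (mul_nonneg hs0 hm)]
        refine ENNReal.ofReal_le_ofReal ?_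
        nlinarith [Real.add_one_le_exp (s * ((K * Z⁻¹).toReal + 1)), mul_nonneg hs0 hm]

lemma ennreal_tprod_eq_iSup {I : Type*} (f : I → ENNReal) (hf : ∀ i, 1 ≤ f i) :
    ∏' i, f i = ⨆ s : Finset I, ∏ i ∈ s, f i :=
  HasProd.tprod_eq (tendsto_atTop_iSup
    (fun _ _ hst => Finset.prod_le_prod_of_subset_of_one_le' hst fun i _ _ => hf i))

lemma lintegral_finset_prod_of_iIndepFun {Ω I : Type*} [MeasureSpace Ω]
    [IsProbabilityMeasure (ℙ : Measure Ω)] (g : I → Ω → ENNReal)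
    (hmeas : ∀ i, Measurable (g i))
    (hind : iIndepFun g ℙ) (s : Finset I) :
    ∫⁻ ω, ∏ i ∈ s, g i ω ∂ℙ = ∏ i ∈ s, ∫⁻ ω, g i ω ∂ℙ := by
  classical
  induction s using Finset.induction_on with
  | empty => simp
  | @insert a s ha ih =>
    rw [Finset.prod_insert ha]
    have h1 : ∫⁻ ω, ∏ i ∈ insert a s, g i ω ∂ℙ = ∫⁻ ω, g a ω * ∏ i ∈ s, g i ω ∂ℙ :=
      lintegral_congr fun ω => by rw [Finset.prod_insert ha]
    have hprodmeas : Measurable fun ω => ∏ i ∈ s, g i ω :=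
      Finset.measurable_prod s fun i _ => hmeas i
    have hindep2 : IndepFun (g a) (fun ω => ∏ i ∈ s, g i ω) ℙ := by
      have h := (hind.indepFun_finset_prod_of_notMem hmeas ha).symm
      have heq : (∏ j ∈ s, g j) = fun ω => ∏ i ∈ s, g i ω := by
        funext ω; exact Finset.prod_apply ω s g
      rwa [heq] at h
    rw [h1, lintegral_mul_eq_lintegral_mul_lintegral_of_indepFun'' (hmeas a).aemeasurable
      hprodmeas.aemeasurable hindep2, ih]

lemma lintegral_tprod_le {Ω I : Type*} [Countable I] [MeasureSpace Ω]
    [IsProbabilityMeasure (ℙ : Measure Ω)] (g : I → Ω → ENNReal)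
    (hmeas : ∀ i, Measurable (g i))
    (hind : iIndepFun g ℙ)
    (h1 : ∀ i ω, 1 ≤ g i ω) (B : ENNReal)
    (hB : ∀ s : Finset I, ∏ i ∈ s, ∫⁻ ω, g i ω ∂ℙ ≤ B) :
    ∫⁻ ω, ∏' i, g i ω ∂ℙ ≤ B := by
  classical
  have hmono : ∀ ω, Monotone fun s : Finset I => ∏ i ∈ s, g i ω := fun ω _ _ hst =>
    Finset.prod_le_prod_of_subset_of_one_le' hst fun i _ _ => h1 i ω
  calc ∫⁻ ω, ∏' i, g i ω ∂ℙ
      = ∫⁻ ω, ⨆ s : Finset I, ∏ i ∈ s, g i ω ∂ℙ :=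
        lintegral_congr fun ω =>
          ennreal_tprod_eq_iSup (fun i => g i ω) (fun i => h1 i ω)
    _ = ⨆ s : Finset I, ∫⁻ ω, ∏ i ∈ s, g i ω ∂ℙ :=
        lintegral_iSup_directed
          (fun s => (Finset.measurable_prod s fun i _ => hmeas i).aemeasurable)
          (fun s t => ⟨s ∪ t, fun ω => hmono ω Finset.subset_union_left,
            fun ω => hmono ω Finset.subset_union_right⟩)
    _ ≤ B := iSup_le fun s =>
        (lintegral_finset_prod_of_iIndepFun g hmeas hind s).le.trans (hB s)

end Aux

/-- For `p ≥ 1`, `b ≥ 0`, `α > b + d/p` and independent standard `p`-exponential variables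
`ξ_{l,r}` (`1 ≤ r ≤ N_l`, `N_l ≤ c₀ 2^{ld}`), there is `c₂ > 0` with
`E exp(c₂ Σ_{l,r} 2^{−pl(α−b)} |ξ_{l,r}|^p) < ∞`
(the exponential of the sum written as the product of the exponentials). -/
theorem exp_moment_besov_prior {Ω : Type*} [MeasureSpace Ω]
    [IsProbabilityMeasure (ℙ : Measure Ω)]
    (p : ℝ) (hp : 1 ≤ p) (d : ℕ) (hd : 1 ≤ d) (b α c0 : ℝ) (hb : 0 ≤ b)
    (hα : b + d / p < α) (hc0 : 0 < c0) (N : ℕ → ℕ)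
    (hN : ∀ l, (N l : ℝ) ≤ c0 * 2 ^ (l * d))
    (ξ : (Σ l : ℕ, Fin (N l)) → Ω → ℝ) (hmeas : ∀ i, Measurable (ξ i))
    (hdist : ∀ i, Measure.map (ξ i) ℙ = stdPExp p)
    (hindep : iIndepFun ξ ℙ) :
    ∃ c2 > (0 : ℝ), ∫⁻ ω, ∏' i : Σ l : ℕ, Fin (N l),
        ENNReal.ofReal
          (Real.exp (c2 * ((2 : ℝ) ^ (-(p * (i.1 : ℝ) * (α - b))) * |ξ i ω| ^ p))) ∂ℙ < ⊤ := by
  obtain ⟨M, hM0, hM⟩ := stdPExp_moment p hp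
  have hp0 : 0 < p := lt_of_lt_of_le one_pos hp
  have hd0 : (0:ℝ) < (d:ℝ) := by exact_mod_cast hd
  have hδ : (0:ℝ) < α - b := by
    have h1 : (0:ℝ) < (d:ℝ) / p := by positivity
    linarith
  have hδd : (d : ℝ) < p * (α - b) := by
    have h2 : (d:ℝ) / p < α - b := by linarith
    have := (div_lt_iff₀ hp0).mp h2
    linarith
  set c2 : ℝ := 1 / (2 * p) with hc2
  have hc2pos : 0 < c2 := by positivity
  have htpos : ∀ l : ℕ, (0:ℝ) < (2:ℝ) ^ (-(p * (l:ℝ) * (α - b))) := fun l =>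
    Real.rpow_pos_of_pos two_pos _
  have htle1 : ∀ l : ℕ, (2:ℝ) ^ (-(p * (l:ℝ) * (α - b))) ≤ 1 := fun l =>
    Real.rpow_le_one_of_one_le_of_nonpos one_le_two
      (neg_nonpos.mpr (mul_nonneg (mul_nonneg hp0.le (Nat.cast_nonneg l)) hδ.le))
  have habs : Continuous fun x : ℝ => |x| ^ p :=
    continuous_abs.rpow_const fun x => Or.inr hp0.le
  -- summability of the weights over the sigma type
  have hsum : Summable (fun i : (Σ l : ℕ, Fin (N l)) =>
      (2:ℝ) ^ (-(p * (i.1:ℝ) * (α - b)))) := by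
    refine (summable_sigma_of_nonneg fun i => (htpos i.1).le).mpr
      ⟨fun l => Summable.of_finite, ?_⟩
    have hNt : Summable fun l : ℕ => (N l : ℝ) * (2:ℝ) ^ (-(p * (l:ℝ) * (α - b))) := by
      have hr0 : (0:ℝ) ≤ (2:ℝ) ^ ((d:ℝ) - p * (α - b)) := (Real.rpow_pos_of_pos two_pos _).le
      have hr1 : (2:ℝ) ^ ((d:ℝ) - p * (α - b)) < 1 :=
        Real.rpow_lt_one_of_one_lt_of_neg one_lt_two (by linarith)
      refine Summable.of_nonneg_of_le (fun l => mul_nonneg (Nat.cast_nonneg _) (htpos l).le)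
        (fun l => ?_) ((summable_geometric_of_lt_one hr0 hr1).mul_left c0)
      have h1 : (N l : ℝ) * (2:ℝ) ^ (-(p * (l:ℝ) * (α - b))) ≤
          (c0 * 2 ^ (l * d)) * (2:ℝ) ^ (-(p * (l:ℝ) * (α - b))) :=
        mul_le_mul_of_nonneg_right (hN l) (htpos l).le
      refine h1.trans (le_of_eq ?_)
      rw [mul_assoc, ← Real.rpow_natCast (2:ℝ) (l * d), ← Real.rpow_add two_pos,
        ← Real.rpow_natCast ((2:ℝ) ^ ((d:ℝ) - p * (α - b))) l,
        ← Real.rpow_mul (by norm_num : (0:ℝ) ≤ 2)]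
      congr 1
      push_cast
      ring
    refine hNt.congr fun l => ?_
    rw [tsum_fintype]
    simp [Finset.sum_const, Finset.card_univ, mul_comm]
  set T := ∑' i : (Σ l : ℕ, Fin (N l)), (2:ℝ) ^ (-(p * (i.1:ℝ) * (α - b))) with hT
  refine ⟨c2, hc2pos, ?_⟩
  refine lt_of_le_of_lt (lintegral_tprod_le
    (fun i ω => ENNReal.ofReal
      (Real.exp (c2 * ((2:ℝ) ^ (-(p * (i.1:ℝ) * (α - b))) * |ξ i ω| ^ p))))
    ?_ ?_ ?_ (ENNReal.ofReal (Real.exp (c2 * M * T))) ?_) ENNReal.ofReal_lt_top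
  · intro i
    exact ((ENNReal.continuous_ofReal.comp (Real.continuous_exp.comp
      (continuous_const.mul (continuous_const.mul habs)))).measurable).comp (hmeas i)
  · exact hindep.comp
      (fun i (x : ℝ) => ENNReal.ofReal
        (Real.exp (c2 * ((2:ℝ) ^ (-(p * (i.1:ℝ) * (α - b))) * |x| ^ p))))
      (fun i => (ENNReal.continuous_ofReal.comp (Real.continuous_exp.comp
        (continuous_const.mul (continuous_const.mul habs)))).measurable)
  · intro i ω
    refine ENNReal.one_le_ofReal.mpr (Real.one_le_exp ?_)
    have := Real.rpow_nonneg (abs_nonneg (ξ i ω)) p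
    positivity
  · intro s
    have hper : ∀ i : (Σ l : ℕ, Fin (N l)),
        ∫⁻ ω, ENNReal.ofReal
          (Real.exp (c2 * ((2:ℝ) ^ (-(p * (i.1:ℝ) * (α - b))) * |ξ i ω| ^ p))) ∂ℙ ≤
        ENNReal.ofReal (Real.exp ((c2 * (2:ℝ) ^ (-(p * (i.1:ℝ) * (α - b)))) * M)) := by
      intro i
      have hmap : ∫⁻ ω, ENNReal.ofReal
          (Real.exp (c2 * ((2:ℝ) ^ (-(p * (i.1:ℝ) * (α - b))) * |ξ i ω| ^ p))) ∂ℙ =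
          ∫⁻ x, ENNReal.ofReal
            (Real.exp ((c2 * (2:ℝ) ^ (-(p * (i.1:ℝ) * (α - b)))) * |x| ^ p)) ∂(stdPExp p) := by
        have hfm : Measurable fun x : ℝ => ENNReal.ofReal
            (Real.exp ((c2 * (2:ℝ) ^ (-(p * (i.1:ℝ) * (α - b)))) * |x| ^ p)) :=
          (ENNReal.continuous_ofReal.comp (Real.continuous_exp.comp
            (continuous_const.mul habs))).measurable
        rw [← hdist i, lintegral_map hfm (hmeas i)]
        exact lintegral_congr fun ω => by rw [mul_assoc c2]
      rw [hmap]
      refine hM _ (mul_nonneg hc2pos.le (htpos i.1).le) ?_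
      calc c2 * (2:ℝ) ^ (-(p * (i.1:ℝ) * (α - b))) ≤ c2 * 1 :=
            mul_le_mul_of_nonneg_left (htle1 i.1) hc2pos.le
        _ = 1 / (2 * p) := by rw [mul_one]
    calc ∏ i ∈ s, ∫⁻ ω, ENNReal.ofReal
          (Real.exp (c2 * ((2:ℝ) ^ (-(p * (i.1:ℝ) * (α - b))) * |ξ i ω| ^ p))) ∂ℙ
        ≤ ∏ i ∈ s, ENNReal.ofReal
            (Real.exp ((c2 * (2:ℝ) ^ (-(p * (i.1:ℝ) * (α - b)))) * M)) :=
          Finset.prod_le_prod' fun i _ => hper i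
      _ = ENNReal.ofReal (∏ i ∈ s,
            Real.exp ((c2 * (2:ℝ) ^ (-(p * (i.1:ℝ) * (α - b)))) * M)) :=
          (ENNReal.ofReal_prod_of_nonneg fun i _ => (Real.exp_pos _).le).symm
      _ ≤ ENNReal.ofReal (Real.exp (c2 * M * T)) := by
          refine ENNReal.ofReal_le_ofReal ?_
          rw [← Real.exp_sum]
          refine Real.exp_le_exp.mpr ?_
          have hsumle : ∑ i ∈ s, (2:ℝ) ^ (-(p * (i.1:ℝ) * (α - b))) ≤ T :=
            Summable.sum_le_tsum s (fun i _ => (htpos i.1).le) hsum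
          calc ∑ i ∈ s, (c2 * (2:ℝ) ^ (-(p * (i.1:ℝ) * (α - b)))) * M
              = (c2 * M) * ∑ i ∈ s, (2:ℝ) ^ (-(p * (i.1:ℝ) * (α - b))) := by
                rw [Finset.mul_sum]
                exact Finset.sum_congr rfl fun i _ => by ring
            _ ≤ (c2 * M) * T := mul_le_mul_of_nonneg_left hsumle
                (mul_nonneg hc2pos.le hM0)
            _ = c2 * M * T := rfl
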